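/- Let Z be unit Fréchet and A = (A₁, …, A_d) independent of Z with 0 < E[max(A_j,0)] < ∞ for all j. Then for all x ∈ (0,∞)^d, lim_{n→∞} P[A₁Z ≤ n x₁, …, A_d Z ≤ n x_d]^n = exp{−E[max(A₁/x₁, …, A_d/x_d, 0)]}. -/

import Mathlib

open MeasureTheory ProbabilityTheory Filter

lemma aux_pow_tendsto_exp {I : ℕ → ℝ} (hIpos : ∀ n, 0 < I n) {c : ℝ} (hc : 0 < c)
    (h : Tendsto (fun n : ℕ => (n : ℝ) * (1 - I n)) atTop (nhds c)) :
    Tendsto (fun n : ℕ => I n ^ n) atTop (nhds (Real.exp (-c))) := by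
  have hI1 : Tendsto I atTop (nhds 1) := by
    have h0 : Tendsto (fun n : ℕ => ((n : ℝ) * (1 - I n)) * (1 / n)) atTop (nhds (c * 0)) :=
      h.mul tendsto_one_div_atTop_nhds_zero_nat
    rw [mul_zero] at h0
    have h1 : Tendsto (fun n : ℕ => 1 - I n) atTop (nhds 0) := by
      refine h0.congr' ?_
      filter_upwards [eventually_gt_atTop 0] with n hn
      have : (n : ℝ) ≠ 0 := Nat.cast_ne_zero.mpr hn.ne'
      field_simp
    have := (tendsto_const_nhds (x := (1:ℝ)) (f := atTop)).sub h1
    simpa using this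
  have hlt1 : ∀ᶠ n in atTop, I n < 1 := by
    have h2 : ∀ᶠ n : ℕ in atTop, c / 2 < (n : ℝ) * (1 - I n) :=
      h.eventually (eventually_gt_nhds (show c/2 < c by linarith))
    filter_upwards [h2, eventually_gt_atTop 0] with n hn hn0
    by_contra hle
    push_neg at hle
    have : (n : ℝ) * (1 - I n) ≤ 0 :=
      mul_nonpos_iff.mpr (Or.inl ⟨by positivity, by linarith⟩)
    linarith
  have hslope : Tendsto (fun y : ℝ => Real.log y / (y - 1)) (nhdsWithin 1 {(1:ℝ)}ᶜ) (nhds 1) := by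
    have := hasDerivAt_iff_tendsto_slope.mp (Real.hasDerivAt_log one_ne_zero)
    rw [inv_one] at this
    refine this.congr fun y => ?_
    simp [slope_def_field, Real.log_one]
  have hIin : Tendsto I atTop (nhdsWithin 1 {(1:ℝ)}ᶜ) := by
    refine tendsto_nhdsWithin_of_tendsto_nhds_of_eventually_within _ hI1 ?_
    filter_upwards [hlt1] with n hn using ne_of_lt hn
  have hcomp : Tendsto (fun n : ℕ => Real.log (I n) / (I n - 1)) atTop (nhds 1) :=
    hslope.comp hIin
  have hnlog : Tendsto (fun n : ℕ => (n : ℝ) * Real.log (I n)) atTop (nhds (-c)) := by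
    have hm : Tendsto (fun n : ℕ => (-((n : ℝ) * (1 - I n))) * (Real.log (I n) / (I n - 1)))
        atTop (nhds ((-c) * 1)) := (h.neg).mul hcomp
    rw [mul_one] at hm
    refine hm.congr' ?_
    filter_upwards [hlt1] with n hn
    have hne : I n - 1 ≠ 0 := by intro hh; apply absurd (by linarith : I n = 1) hn.ne
    field_simp
    ring
  have hexp := (Real.continuous_exp.tendsto _).comp hnlog
  refine hexp.congr fun n => ?_
  simp only [Function.comp]
  rw [Real.exp_nat_mul, Real.exp_log (hIpos n)]

/-- pointwise limit `n (1 - e^{-t/n}) → t` for `t ≥ 0`. -/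
lemma aux_tendsto_n_one_sub_exp {t : ℝ} (ht : 0 ≤ t) :
    Tendsto (fun n : ℕ => (n : ℝ) * (1 - Real.exp (-(t / n)))) atTop (nhds t) := by
  rcases eq_or_lt_of_le ht with h0 | hpos
  · subst h0
    simpa using tendsto_const_nhds (x := (0:ℝ)) (f := atTop)
  · have hderiv : HasDerivAt (fun u : ℝ => 1 - Real.exp (-u)) 1 0 := by
      have h1 : HasDerivAt (fun u : ℝ => Real.exp (-u)) (-1) 0 := by
        simpa [Function.comp_def] using (Real.hasDerivAt_exp (-0:ℝ)).comp 0 (hasDerivAt_neg (0:ℝ))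
      simpa using h1.const_sub 1
    have hslope : Tendsto (fun u : ℝ => (1 - Real.exp (-u)) / u)
        (nhdsWithin 0 {(0:ℝ)}ᶜ) (nhds 1) := by
      have := hasDerivAt_iff_tendsto_slope.mp hderiv
      refine this.congr fun u => ?_
      simp [slope_def_field]
    have hu : Tendsto (fun n : ℕ => t / n) atTop (nhdsWithin 0 {(0:ℝ)}ᶜ) := by
      refine tendsto_nhdsWithin_of_tendsto_nhds_of_eventually_within _
        (tendsto_const_div_atTop_nhds_zero_nat t) ?_
      filter_upwards [eventually_gt_atTop 0] with n hn
      have : (0:ℝ) < n := by exact_mod_cast hn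
      exact (div_pos hpos this).ne'
    have hm : Tendsto (fun n : ℕ => t * ((1 - Real.exp (-(t / n))) / (t / n)))
        atTop (nhds (t * 1)) := tendsto_const_nhds.mul (hslope.comp hu)
    rw [mul_one] at hm
    refine hm.congr' ?_
    filter_upwards [eventually_gt_atTop 0] with n hn
    have hn' : (0:ℝ) < n := by exact_mod_cast hn
    have : t / n ≠ 0 := (div_pos hpos hn').ne'
    field_simp

/-- If `Z` is unit Fréchet and independent of `A = (A₁,…,A_d)` with
`0 < E[max(A_j,0)] < ∞` for all `j`, then for all `x ∈ (0,∞)^d`,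
`lim_{n→∞} P[A₁Z ≤ n x₁, …, A_dZ ≤ n x_d]^n = exp{−E[max(A₁/x₁, …, A_d/x_d, 0)]}`. -/
theorem frechet_mixture_max_stable_limit {d : ℕ} (hd : 0 < d)
    {Ω : Type*} [MeasureSpace Ω] [IsProbabilityMeasure (ℙ : Measure Ω)]
    (Z : Ω → ℝ) (hZmeas : Measurable Z)
    (hZ : ∀ z : ℝ, 0 < z → (ℙ {ω | Z ω ≤ z}) = ENNReal.ofReal (Real.exp (-(1 / z))))
    (A : Fin d → Ω → ℝ) (hAmeas : ∀ j, Measurable (A j))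
    (hAint : ∀ j, Integrable (fun ω => max (A j ω) 0))
    (hApos : ∀ j, 0 < ∫ ω, max (A j ω) 0)
    (hindep : IndepFun Z (fun ω => fun j => A j ω)) :
    ∀ x : Fin d → ℝ, (∀ j, 0 < x j) →
      Filter.Tendsto
        (fun n : ℕ => (ℙ {ω | ∀ j, A j ω * Z ω ≤ n * x j}).toReal ^ n)
        Filter.atTop
        (nhds (Real.exp (-(∫ ω, max (Finset.univ.sup'
          (Finset.univ_nonempty_iff.2 (Fin.pos_iff_nonempty.1 hd))
          (fun j => A j ω / x j)) 0)))) := by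
  intro x hx
  have ne : (Finset.univ : Finset (Fin d)).Nonempty :=
    Finset.univ_nonempty_iff.2 (Fin.pos_iff_nonempty.1 hd)
  set Ma : (Fin d → ℝ) → ℝ := fun a => max (Finset.univ.sup' ne fun j => a j / x j) 0 with hMa_def
  set M : Ω → ℝ := fun ω => Ma (fun j => A j ω) with hM_def
  -- measurability of Ma
  have hMameas : Measurable Ma := by
    set g : Fin d → (Fin d → ℝ) → ℝ := fun j a => a j / x j with hg_def
    have h1 : Measurable (Finset.univ.sup' ne g) :=
      Finset.measurable_sup' ne fun j _ => by exact (measurable_pi_apply (X := fun _ : Fin d => ℝ) j).div_const (x j)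
    have h2 : (fun a : Fin d → ℝ => Finset.univ.sup' ne fun j => a j / x j)
        = Finset.univ.sup' ne g := by
      funext a
      exact (Finset.sup'_apply ne g a).symm
    have h3 : Measurable (fun a : Fin d → ℝ => Finset.univ.sup' ne fun j => a j / x j) := by
      rw [h2]; exact h1
    exact h3.max measurable_const
  have hW : Measurable (fun ω => fun j => A j ω) := measurable_pi_lambda _ fun j => hAmeas j
  have hMmeas : Measurable M := hMameas.comp hW
  have hMnonneg : ∀ ω, 0 ≤ M ω := fun ω => le_max_right _ _
  -- pointwise bound : M ≤ ∑ j, max (A j) 0 / x j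
  have hmaxdiv : ∀ (j : Fin d) (ω : Ω), max (A j ω / x j) 0 = max (A j ω) 0 / x j := by
    intro j ω
    conv_lhs => rw [← zero_div (x j)]
    rw [max_div_div_right (hx j).le]
  have hMle : ∀ ω, M ω ≤ ∑ j, max (A j ω) 0 / x j := by
    intro ω
    refine max_le (Finset.sup'_le _ _ fun j _ => ?_)
      (Finset.sum_nonneg fun j _ => div_nonneg (le_max_right _ _) (hx j).le)
    calc A j ω / x j ≤ max (A j ω) 0 / x j := by
          gcongr
          · exact (hx j).le
          · exact le_max_left _ _
      _ ≤ ∑ k, max (A k ω) 0 / x k :=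
          Finset.single_le_sum (f := fun k => max (A k ω) 0 / x k)
            (fun k _ => div_nonneg (le_max_right _ _) (hx k).le) (Finset.mem_univ j)
  have hsumint : Integrable (fun ω => ∑ j, max (A j ω) 0 / x j) := by
    exact integrable_finset_sum _ fun j _ => (hAint j).div_const (x j)
  have hMint : Integrable M := by
    refine hsumint.mono' hMmeas.aestronglyMeasurable ?_
    filter_upwards with ω
    rw [Real.norm_of_nonneg (hMnonneg ω)]
    exact hMle ω
  set c : ℝ := ∫ ω, M ω with hc_def
  have hc : 0 < c := by
    obtain ⟨j0⟩ := Fin.pos_iff_nonempty.1 hd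
    have hle : ∀ ω, max (A j0 ω / x j0) 0 ≤ M ω := by
      intro ω
      exact max_le_max
        (Finset.le_sup' (fun j => (fun j => A j ω) j / x j) (Finset.mem_univ j0)) le_rfl
    have hint0 : Integrable (fun ω => max (A j0 ω / x j0) 0) := by
      refine Integrable.congr ((hAint j0).div_const (x j0)) ?_
      filter_upwards with ω
      exact (hmaxdiv j0 ω).symm
    have h1 : (∫ ω, max (A j0 ω / x j0) 0) ≤ c := integral_mono hint0 hMint hle
    have h2 : (∫ ω, max (A j0 ω / x j0) 0) = (∫ ω, max (A j0 ω) 0) / x j0 := by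
      rw [← integral_div]
      exact integral_congr_ae (Filter.Eventually.of_forall fun ω => hmaxdiv j0 ω)
    have := hApos j0
    have hxj := hx j0
    nlinarith [div_pos this hxj, h2 ▸ h1]
  -- integrability of the exponentials
  have hIint : ∀ n : ℕ, Integrable (fun ω => Real.exp (-(M ω) / n)) := by
    intro n
    refine (integrable_const (1:ℝ)).mono'
      ((Real.continuous_exp.measurable.comp ((hMmeas.neg).div_const _)).aestronglyMeasurable) ?_
    filter_upwards with ω
    rw [Real.norm_of_nonneg (Real.exp_pos _).le]
    exact Real.exp_le_one_iff.mpr (div_nonpos_of_nonpos_of_nonneg (neg_nonpos.mpr (hMnonneg ω)) (Nat.cast_nonneg n))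
  set I : ℕ → ℝ := fun n => ∫ ω, Real.exp (-(M ω) / n) with hI_def
  have hIpos : ∀ n, 0 < I n := by
    intro n
    rw [hI_def]
    refine (integral_pos_iff_support_of_nonneg (fun ω => (Real.exp_pos _).le) (hIint n)).mpr ?_
    have : Function.support (fun ω => Real.exp (-(M ω) / n)) = Set.univ :=
      Set.eq_univ_of_forall fun ω => (Real.exp_pos _).ne'
    rw [this]
    simp
  -- the key identity
  have hPn : ∀ n : ℕ, 1 ≤ n →
      (ℙ {ω | ∀ j, A j ω * Z ω ≤ n * x j}) = ENNReal.ofReal (I n) := by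
    intro n hn
    have hn' : (0:ℝ) < n := by exact_mod_cast hn
    set μZ := Measure.map Z ℙ with hμZ_def
    set μA := Measure.map (fun ω => fun j => A j ω) ℙ with hμA_def
    haveI : IsProbabilityMeasure μZ := Measure.isProbabilityMeasure_map hZmeas.aemeasurable
    haveI : IsProbabilityMeasure μA := Measure.isProbabilityMeasure_map hW.aemeasurable
    have hμZ_le : ∀ z : ℝ, 0 < z → μZ (Set.Iic z) = ENNReal.ofReal (Real.exp (-(1/z))) := by
      intro z hz
      rw [hμZ_def, Measure.map_apply hZmeas measurableSet_Iic]
      exact hZ z hz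
    have hμZ0 : μZ (Set.Iic (0:ℝ)) = 0 := by
      have hk : ∀ k : ℕ, 1 ≤ k → μZ (Set.Iic (0:ℝ)) ≤ ENNReal.ofReal (Real.exp (-(k:ℝ))) := by
        intro k hk
        have hk' : (0:ℝ) < 1/k := by positivity
        calc μZ (Set.Iic (0:ℝ)) ≤ μZ (Set.Iic (1/(k:ℝ))) :=
              measure_mono fun t ht => le_trans ht hk'.le
          _ = ENNReal.ofReal (Real.exp (-(1/(1/(k:ℝ))))) := hμZ_le _ hk'
          _ = _ := by rw [one_div_one_div]
      have htend : Tendsto (fun k : ℕ => ENNReal.ofReal (Real.exp (-(k:ℝ)))) atTop (nhds 0) := by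
        rw [show (0 : ENNReal) = ENNReal.ofReal 0 by simp]
        refine (ENNReal.continuous_ofReal.tendsto _).comp ?_
        exact Real.tendsto_exp_atBot.comp
          (tendsto_neg_atBot_iff.mpr tendsto_natCast_atTop_atTop)
      have hle0 : μZ (Set.Iic (0:ℝ)) ≤ 0 := by
        refine ge_of_tendsto htend ?_
        filter_upwards [eventually_ge_atTop 1] with k hk1 using hk k hk1
      exact le_antisymm hle0 (zero_le')
    -- the slice computation
    have hslice : ∀ a : Fin d → ℝ,
        μZ {z | ∀ j, a j * z ≤ n * x j} = ENNReal.ofReal (Real.exp (-(Ma a) / n)) := by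
      intro a
      by_cases hcase : ∀ j, a j ≤ 0
      · have hsup0 : Ma a = 0 := by
          rw [hMa_def]
          exact max_eq_right (Finset.sup'_le _ _ fun j _ =>
            div_nonpos_of_nonpos_of_nonneg (hcase j) (hx j).le)
        rw [hsup0]
        simp only [neg_zero, zero_div, Real.exp_zero, ENNReal.ofReal_one]
        have hsub : Set.Ioi (0:ℝ) ⊆ {z | ∀ j, a j * z ≤ n * x j} := by
          intro z hz j
          have h1 : a j * z ≤ 0 := mul_nonpos_iff.mpr (Or.inr ⟨hcase j, le_of_lt hz⟩)
          have h2 : (0:ℝ) ≤ n * x j := mul_nonneg (Nat.cast_nonneg n) (hx j).le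
          linarith
        have hIoi : μZ (Set.Ioi (0:ℝ)) = 1 := by
          have : Set.Ioi (0:ℝ) = (Set.Iic (0:ℝ))ᶜ := by simp
          rw [this, measure_compl measurableSet_Iic (measure_ne_top _ _), hμZ0,
            measure_univ, tsub_zero]
        refine le_antisymm prob_le_one ?_
        calc (1 : ENNReal) = μZ (Set.Ioi (0:ℝ)) := hIoi.symm
          _ ≤ _ := measure_mono hsub
      · push_neg at hcase
        obtain ⟨j0, hj0⟩ := hcase
        set s := Finset.univ.sup' ne fun j => a j / x j with hs_def
        have hs : 0 < s := lt_of_lt_of_le (div_pos hj0 (hx j0))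
          (Finset.le_sup' (fun j => a j / x j) (Finset.mem_univ j0))
        have hMas : Ma a = s := max_eq_left hs.le
        have hns : (0:ℝ) < n / s := div_pos hn' hs
        have hsub1 : {z | ∀ j, a j * z ≤ n * x j} ⊆ Set.Iic ((n:ℝ)/s) := by
          intro z hz
          rcases le_or_gt z 0 with hz0 | hz0
          · exact le_trans hz0 hns.le
          · have h1 : s ≤ (n:ℝ)/z := by
              rw [hs_def]
              refine Finset.sup'_le _ _ fun j _ => ?_
              rw [div_le_div_iff₀ (hx j) hz0]
              exact hz j
            have : z * s ≤ n := by
              rw [le_div_iff₀ hz0] at h1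
              linarith [h1]
            exact (le_div_iff₀ hs).mpr this
        have hsub2 : Set.Iic ((n:ℝ)/s) ⊆ {z | ∀ j, a j * z ≤ n * x j} ∪ Set.Iic (0:ℝ) := by
          intro z hz
          rcases le_or_gt z 0 with hz0 | hz0
          · exact Or.inr hz0
          · refine Or.inl fun j => ?_
            have h1 : a j / x j ≤ s := Finset.le_sup' (fun j => a j / x j) (Finset.mem_univ j)
            have h2 : s ≤ (n:ℝ)/z := by
              rw [le_div_iff₀ hz0]
              rw [Set.mem_Iic, le_div_iff₀ hs] at hz
              linarith
            have h3 : a j / x j ≤ (n:ℝ)/z := le_trans h1 h2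
            rw [div_le_div_iff₀ (hx j) hz0] at h3
            exact h3
        have hval : μZ (Set.Iic ((n:ℝ)/s)) = ENNReal.ofReal (Real.exp (-(Ma a) / n)) := by
          rw [hμZ_le _ hns, hMas]
          congr 1
          rw [one_div_div, neg_div]
        have hle1 : μZ {z | ∀ j, a j * z ≤ n * x j} ≤ ENNReal.ofReal (Real.exp (-(Ma a)/n)) :=
          hval ▸ measure_mono hsub1
        have hle2 : ENNReal.ofReal (Real.exp (-(Ma a)/n)) ≤ μZ {z | ∀ j, a j * z ≤ n * x j} := by
          rw [← hval]
          calc μZ (Set.Iic ((n:ℝ)/s)) ≤ μZ {z | ∀ j, a j * z ≤ n * x j} + μZ (Set.Iic (0:ℝ)) :=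
                le_trans (measure_mono hsub2) (measure_union_le _ _)
            _ = μZ {z | ∀ j, a j * z ≤ n * x j} := by rw [hμZ0, add_zero]
        exact le_antisymm hle1 hle2
    -- product measure computation
    have hprod : Measure.map (fun ω => ((fun j => A j ω), Z ω)) ℙ = μA.prod μZ :=
      (indepFun_iff_map_prod_eq_prod_map_map hW.aemeasurable hZmeas.aemeasurable).mp hindep.symm
    have hSmeas : MeasurableSet {p : (Fin d → ℝ) × ℝ | ∀ j, p.1 j * p.2 ≤ n * x j} := by
      have : {p : (Fin d → ℝ) × ℝ | ∀ j, p.1 j * p.2 ≤ n * x j}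
          = ⋂ j, {p : (Fin d → ℝ) × ℝ | p.1 j * p.2 ≤ n * x j} := by
        ext p; simp
      rw [this]
      exact MeasurableSet.iInter fun j =>
        measurableSet_le ((measurable_fst.eval).mul measurable_snd)
          measurable_const
    have hev : {ω | ∀ j, A j ω * Z ω ≤ n * x j}
        = (fun ω => ((fun j => A j ω), Z ω)) ⁻¹' {p : (Fin d → ℝ) × ℝ | ∀ j, p.1 j * p.2 ≤ n * x j} :=
      rfl
    rw [hev, ← Measure.map_apply (hW.prodMk hZmeas) hSmeas, hprod,
      Measure.prod_apply hSmeas]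
    have hsections : ∀ a : Fin d → ℝ,
        (Prod.mk a ⁻¹' {p : (Fin d → ℝ) × ℝ | ∀ j, p.1 j * p.2 ≤ n * x j})
          = {z | ∀ j, a j * z ≤ n * x j} := fun a => rfl
    calc (∫⁻ a, μZ (Prod.mk a ⁻¹' {p : (Fin d → ℝ) × ℝ | ∀ j, p.1 j * p.2 ≤ n * x j}) ∂μA)
        = ∫⁻ a, ENNReal.ofReal (Real.exp (-(Ma a) / n)) ∂μA := by
          refine lintegral_congr fun a => ?_
          rw [hsections a, hslice a]
      _ = ENNReal.ofReal (∫ a, Real.exp (-(Ma a) / n) ∂μA) := by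
          rw [ofReal_integral_eq_lintegral_ofReal]
          · refine (integrable_const (1:ℝ)).mono'
              ((Real.continuous_exp.measurable.comp
                ((hMameas.neg).div_const _)).aestronglyMeasurable) ?_
            filter_upwards with a
            rw [Real.norm_of_nonneg (Real.exp_pos _).le]
            refine Real.exp_le_one_iff.mpr
              (div_nonpos_of_nonpos_of_nonneg (neg_nonpos.mpr (le_max_right _ _))
                (Nat.cast_nonneg n))
          · filter_upwards with a using (Real.exp_pos _).le
      _ = ENNReal.ofReal (I n) := by
          rw [hI_def, hμA_def, integral_map hW.aemeasurable]
          exact (Real.continuous_exp.measurable.comp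
            ((hMameas.neg).div_const _)).aestronglyMeasurable
  -- n (1 - I n) → c by dominated convergence
  have hTend : Tendsto (fun n : ℕ => (n : ℝ) * (1 - I n)) atTop (nhds c) := by
    have heq : ∀ n : ℕ, (n : ℝ) * (1 - I n) = ∫ ω, (n : ℝ) * (1 - Real.exp (-(M ω) / n)) := by
      intro n
      rw [integral_const_mul, integral_sub (integrable_const 1) (hIint n), integral_const]
      simp [measure_univ]
      left; rfl
    have hdct : Tendsto (fun n : ℕ => ∫ ω, (n : ℝ) * (1 - Real.exp (-(M ω) / n))) atTop
        (nhds (∫ ω, M ω)) := by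
      refine tendsto_integral_of_dominated_convergence M
        (fun n => (measurable_const.mul
          (measurable_const.sub
            (Real.continuous_exp.measurable.comp ((hMmeas.neg).div_const _)))).aestronglyMeasurable)
        hMint (fun n => ?_) ?_
      · filter_upwards with ω
        have ht := hMnonneg ω
        have h1 : Real.exp (-(M ω) / n) ≤ 1 :=
          Real.exp_le_one_iff.mpr (div_nonpos_of_nonpos_of_nonneg (neg_nonpos.mpr ht) (Nat.cast_nonneg n))
        rcases Nat.eq_zero_or_pos n with h0 | hpos
        · subst h0; simpa using ht
        · have hn' : (0:ℝ) < n := by exact_mod_cast hpos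
          rw [Real.norm_of_nonneg (by nlinarith)]
          have h2 : 1 - Real.exp (-(M ω) / n) ≤ M ω / n := by
            rw [neg_div]
            have h3 := Real.add_one_le_exp (-(M ω / n))
            linarith
          calc (n : ℝ) * (1 - Real.exp (-(M ω) / n)) ≤ n * (M ω / n) := by nlinarith
            _ = M ω := by field_simp
      · filter_upwards with ω
        have := aux_tendsto_n_one_sub_exp (hMnonneg ω)
        refine this.congr fun n => ?_
        rw [neg_div]
    exact (hdct.congr fun n => (heq n).symm) |>.congr (fun n => rfl) |>.mono_right le_rfl
  -- conclude
  have hfinal : Tendsto (fun n : ℕ => I n ^ n) atTop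
      (nhds (Real.exp (-(∫ ω, max (Finset.univ.sup'
        (Finset.univ_nonempty_iff.2 (Fin.pos_iff_nonempty.1 hd))
        (fun j => A j ω / x j)) 0)))) := aux_pow_tendsto_exp hIpos hc hTend
  refine hfinal.congr' ?_
  filter_upwards [eventually_ge_atTop 1] with n hn
  rw [hPn n hn, ENNReal.toReal_ofReal (hIpos n).le]
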